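/- arXiv:math/0402215 — 3 statements merged into one kernel-verified Lean document; each statement's English description precedes it below -/
import Mathlib

section
/- A finite connected simple graph with as many edges as vertices has exactly one cycle: let V be a nonempty finite type and G a connected simple graph on V whose number of edges equals the number of vertices (G.edgeFinset.card = Fintype.card V). Then (a) G contains a cycle, i.e. there exist a vertex v and a closed walk w : G.Walk v v with w.IsCycle; and (b) any two cycles of G have the same edge set: if w₁ : G.Walk a a and w₂ : G.Walk b b are both cycles, then the set of edges traversed by w₁ equals the set of edges traversed by w₂. -/
open SimpleGraph

-- every connected graph has at least card V - 1 edges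
lemma aux_card_le_edges {V : Type*} [Fintype V] [DecidableEq V]
    (G : SimpleGraph V) [Fintype G.edgeSet] (h : G.Connected) :
    Fintype.card V ≤ G.edgeFinset.card + 1 := by
  classical
  haveI : Nonempty V := h.nonempty
  obtain ⟨r⟩ := h.nonempty
  -- for each v ≠ r pick a neighbor closer to r
  have key : ∀ v : V, v ≠ r → ∃ u : V, G.Adj v u ∧ G.dist u r + 1 = G.dist v r := by
    intro v hv
    obtain ⟨p, hp⟩ := h.exists_walk_length_eq_dist v r
    cases p with
    | nil => exact absurd rfl hv
    | @cons _ m _ hadj q =>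
      refine ⟨m, hadj, le_antisymm ?_ ?_⟩
      · have h1 : G.dist m r ≤ q.length := G.dist_le q
        have h2 : q.length + 1 = G.dist v r := by simpa using hp
        omega
      · have := h.dist_triangle (u := v) (v := m) (w := r)
        have hd : G.dist v m ≤ 1 := by
          have : G.dist v m ≤ (Walk.cons hadj Walk.nil).length := G.dist_le _
          simpa using this
        omega
  choose f hf hf' using key
  have hinj : Set.InjOn (fun v => if hv : v = r then s(r, r) else s(v, f v hv))
      ↑({r}ᶜ : Finset V) := by
    intro a ha b hb hab
    simp only [Finset.coe_compl, Finset.coe_singleton, Set.mem_compl_iff,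
      Set.mem_singleton_iff] at ha hb
    simp only [dif_neg ha, dif_neg hb, Sym2.eq_iff] at hab
    rcases hab with ⟨rfl, _⟩ | ⟨h1, h2⟩
    · rfl
    · exfalso
      have da := hf' a ha
      have db := hf' b hb
      rw [h2] at da
      rw [← h1] at db
      omega
  have hmaps : ∀ v ∈ ({r}ᶜ : Finset V), (fun v => if hv : v = r then s(r, r) else s(v, f v hv)) v
      ∈ G.edgeFinset := by
    intro v hv
    rw [Finset.mem_compl, Finset.mem_singleton] at hv
    simp only [dif_neg hv, mem_edgeFinset, mem_edgeSet]
    exact hf v hv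
  have := Finset.card_le_card_of_injOn _ hmaps hinj
  rw [Finset.card_compl, Finset.card_singleton] at this
  have : 0 < Fintype.card V := Fintype.card_pos
  omega

-- deleting an edge of a cycle keeps the graph connected
lemma aux_del_connected {V : Type*} (G : SimpleGraph V) (hc : G.Connected)
    {u : V} {w : G.Walk u u} (hw : w.IsCycle) {e : Sym2 V} (he : e ∈ w.edges) :
    (G.deleteEdges {e}).Connected := by
  induction e using Sym2.ind with
  | _ x y =>
  have hr : (G \ SimpleGraph.fromEdgeSet {s(x, y)}).Reachable x y :=
    (adj_and_reachable_delete_edges_iff_exists_cycle.mpr ⟨u, w, hw, he⟩).2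
  haveI : Nonempty V := hc.nonempty
  rw [SimpleGraph.deleteEdges]
  refine SimpleGraph.Connected.mk fun a b => ?_
  obtain ⟨p⟩ := hc a b
  induction p with
  | nil => exact Reachable.refl _
  | cons hadj q ih =>
    rename_i c d f
    refine Reachable.trans ?_ ih
    by_cases hcd : s(c, d) = s(x, y)
    · rw [Sym2.eq_iff] at hcd
      rcases hcd with ⟨rfl, rfl⟩ | ⟨rfl, rfl⟩
      · exact hr
      · exact hr.symm
    · exact SimpleGraph.Adj.reachable (by simp [hadj, hcd])

lemma aux_edge_sub {V : Type*} [Fintype V] [Nonempty V] [DecidableEq V]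
    (G : SimpleGraph V) [Fintype G.edgeSet]
    (hconn : G.Connected)
    (hcard : G.edgeFinset.card = Fintype.card V)
    {a b : V} (w₁ : G.Walk a a) (w₂ : G.Walk b b) (h₁ : w₁.IsCycle) (h₂ : w₂.IsCycle)
    {e : Sym2 V} (he₁ : e ∈ w₁.edges) : e ∈ w₂.edges := by
  classical
  by_contra he₂
  set G' := G.deleteEdges {e} with hG'
  haveI : Fintype G'.edgeSet :=
    Set.Finite.fintype (Set.Finite.subset G.edgeSet.toFinite
      (SimpleGraph.edgeSet_mono (SimpleGraph.deleteEdges_le _)))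
  have hc' : G'.Connected := aux_del_connected G hconn h₁ he₁
  -- w₂ transfers to a cycle in G'
  have hsub : ∀ e' ∈ w₂.edges, e' ∉ ({e} : Set (Sym2 V)) := by
    intro e' he' hmem
    rw [Set.mem_singleton_iff] at hmem
    exact he₂ (hmem ▸ he')
  have h₂' := SimpleGraph.Walk.IsCycle.toDeleteEdges G ({e} : Set (Sym2 V)) h₂ hsub
  -- delete an edge of that cycle too
  obtain ⟨e₂, he₂'⟩ : ∃ e₂, e₂ ∈ (w₂.toDeleteEdges {e} hsub).edges := by
    have h3 := h₂'.three_le_length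
    have hl := (w₂.toDeleteEdges {e} hsub).length_edges
    cases h : (w₂.toDeleteEdges {e} hsub).edges with
    | nil => rw [h, List.length_nil] at hl; omega
    | cons x l => exact ⟨x, h ▸ (List.mem_cons_self : x ∈ x :: l)⟩
  set G'' := G'.deleteEdges {e₂} with hG''
  haveI : Fintype G''.edgeSet :=
    Set.Finite.fintype (Set.Finite.subset G.edgeSet.toFinite
      (le_trans (SimpleGraph.edgeSet_mono (SimpleGraph.deleteEdges_le _))
        (SimpleGraph.edgeSet_mono (SimpleGraph.deleteEdges_le _))))
  have hc'' : G''.Connected := aux_del_connected G' hc' h₂' he₂'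
  -- card estimates
  have hlt1 : G'.edgeFinset.card < G.edgeFinset.card := by
    apply Finset.card_lt_card
    rw [Finset.ssubset_iff_of_subset (SimpleGraph.edgeFinset_mono (SimpleGraph.deleteEdges_le _))]
    refine ⟨e, ?_, ?_⟩
    · rw [SimpleGraph.mem_edgeFinset]
      exact w₁.edges_subset_edgeSet he₁
    · rw [SimpleGraph.mem_edgeFinset, SimpleGraph.deleteEdges, SimpleGraph.edgeSet_sdiff,
        SimpleGraph.edgeSet_fromEdgeSet, SimpleGraph.edgeSet_sdiff_sdiff_isDiag]
      simp
  have hlt2 : G''.edgeFinset.card < G'.edgeFinset.card := by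
    apply Finset.card_lt_card
    rw [Finset.ssubset_iff_of_subset (SimpleGraph.edgeFinset_mono (SimpleGraph.deleteEdges_le _))]
    refine ⟨e₂, ?_, ?_⟩
    · rw [SimpleGraph.mem_edgeFinset]
      exact (w₂.toDeleteEdges {e} hsub).edges_subset_edgeSet he₂'
    · rw [SimpleGraph.mem_edgeFinset, SimpleGraph.deleteEdges, SimpleGraph.edgeSet_sdiff,
        SimpleGraph.edgeSet_fromEdgeSet, SimpleGraph.edgeSet_sdiff_sdiff_isDiag]
      simp
  have := aux_card_le_edges G'' hc''
  omega

/-- A finite connected simple graph with as many edges as vertices contains a cycle, and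
any two of its cycles traverse the same set of edges (i.e. it has exactly one cycle). -/
theorem unique_cycle_of_connected_card_edges_eq_card_vertices
    (V : Type*) [Fintype V] [Nonempty V] [DecidableEq V]
    (G : SimpleGraph V) [Fintype G.edgeSet]
    (hconn : G.Connected)
    (hcard : G.edgeFinset.card = Fintype.card V) :
    (∃ (v : V) (w : G.Walk v v), w.IsCycle) ∧
    (∀ (a b : V) (w₁ : G.Walk a a) (w₂ : G.Walk b b), w₁.IsCycle → w₂.IsCycle →
      {e | e ∈ w₁.edges} = {e | e ∈ w₂.edges}) := by
  constructor
  · by_contra h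
    push_neg at h
    have hac : G.IsAcyclic := fun v w hw => h v w hw
    have htree : G.IsTree := ⟨hconn, hac⟩
    have := htree.card_edgeFinset
    omega
  · intro a b w₁ w₂ h₁ h₂
    ext e
    simp only [Set.mem_setOf_eq]
    exact ⟨fun he => aux_edge_sub G hconn hcard w₁ w₂ h₁ h₂ he,
      fun he => aux_edge_sub G hconn hcard w₂ w₁ h₂ h₁ he⟩
end

section
/- Every cycle in the symmetrization of a digraph with outdegree at most one is directed: let V be a finite type and r : V → V → Prop a relation such that for every vertex v there is at most one w with r v w. Let G be the simple graph on V with adjacency x ~ y iff x ≠ y and (r x y or r y x). Then for every closed walk w : G.Walk v v with w.IsCycle, either every dart of w is positively oriented (for every consecutive pair (a, b) of vertices along w, r a b holds) or every dart of w is negatively oriented (for every consecutive pair (a, b) of vertices along w, r b a holds). -/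
private lemma chain'_and' {α : Type*} {R1 R2 : α → α → Prop} :
    ∀ {l : List α}, l.Chain' R1 → l.Chain' R2 →
      l.Chain' fun a b => R1 a b ∧ R2 a b
  | [], _, _ => List.IsChain.nil
  | [_], _, _ => List.IsChain.singleton _
  | _ :: _ :: _, h1, h2 => by
      simp only [List.Chain', List.isChain_cons_cons] at h1 h2 ⊢
      exact ⟨⟨h1.1, h2.1⟩, chain'_and' h1.2 h2.2⟩

private lemma chain_all' {α : Type*} {R : α → α → Prop} {P : α → Prop}
    (hstep : ∀ a b, R a b → P a → P b) :
    ∀ {a : α} {L : List α}, List.Chain R a L → P a → ∀ b ∈ L, P b := by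
  intro a L
  induction L generalizing a with
  | nil => intro _ _ b hb; simp at hb
  | cons c L ih =>
    intro hc hPa b hb
    rw [List.Chain, List.isChain_cons_cons] at hc
    have hPc : P c := hstep _ _ hc.1 hPa
    rcases List.mem_cons.mp hb with h | h
    · exact h ▸ hPc
    · exact ih hc.2 hPc b h

/-- Every cycle in the symmetrization of a digraph with outdegree at most one is directed:
if `r` is a relation on a finite type `V` such that each vertex has at most one
`r`-successor, and `G` is the simple graph with `x ~ y` iff `x ≠ y` and (`r x y` or
`r y x`), then along any cycle of `G` either every dart is positively oriented by `r` or
every dart is negatively oriented by `r`. -/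
theorem cycle_is_directed_of_outdegree_le_one
    (V : Type*) [Fintype V] (r : V → V → Prop)
    (hout : ∀ v w w' : V, r v w → r v w' → w = w')
    (G : SimpleGraph V)
    (hG : ∀ x y : V, G.Adj x y ↔ x ≠ y ∧ (r x y ∨ r y x))
    (v : V) (w : G.Walk v v) (hw : w.IsCycle) :
    (∀ d ∈ w.darts, r d.toProd.1 d.toProd.2) ∨
    (∀ d ∈ w.darts, r d.toProd.2 d.toProd.1) := by
  classical
  by_cases hall : ∀ d ∈ w.darts, r d.toProd.1 d.toProd.2
  · exact Or.inl hall
  right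
  push_neg at hall
  obtain ⟨d0, hd0mem, hd0⟩ := hall
  have hstep : ∀ d d' : G.Dart,
      (d.toProd.2 = d'.toProd.1 ∧ d.edge ≠ d'.edge) →
      ¬ r d.toProd.1 d.toProd.2 → ¬ r d'.toProd.1 d'.toProd.2 := by
    intro d d' ⟨hfst, hedge⟩ hPd hr'
    have hrd : r d.toProd.2 d.toProd.1 :=
      (((hG _ _).mp d.adj).2).resolve_left hPd
    have h1 : d.toProd.1 = d'.toProd.2 :=
      hout d.toProd.2 d.toProd.1 d'.toProd.2 hrd (by rw [hfst]; exact hr')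
    apply hedge
    show s(d.toProd.1, d.toProd.2) = s(d'.toProd.1, d'.toProd.2)
    rw [← hfst, ← h1]
    exact Sym2.eq_swap
  -- chain of DartAdj on doubled darts
  have hWdarts : (w.append w).darts = w.darts ++ w.darts := w.darts_append w
  have hchainD : List.Chain' G.DartAdj (w.darts ++ w.darts) := by
    rw [← hWdarts]; exact (w.append w).isChain_dartAdj_darts
  have hDparts := List.isChain_append.mp hchainD
  -- pairwise distinct edges within w.darts
  have hnodup : w.edges.Nodup := hw.edges_nodup
  have hpw : w.darts.Pairwise fun d d' => d.edge ≠ d'.edge := by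
    rw [SimpleGraph.Walk.edges] at hnodup
    exact List.pairwise_map.mp hnodup
  have hchainE : List.Chain' (fun d d' : G.Dart => d.edge ≠ d'.edge) w.darts :=
    hpw.isChain
  have hchainL :
      List.Chain' (fun d d' : G.Dart =>
        d.toProd.2 = d'.toProd.1 ∧ d.edge ≠ d'.edge) w.darts :=
    chain'_and' hDparts.1 hchainE
  -- length facts
  have hlen : 2 ≤ w.darts.length := by
    have h3 := hw.three_le_length
    rw [w.length_darts]
    omega
  obtain ⟨a, t, hat⟩ : ∃ a t, w.darts = a :: t := by
    cases h : w.darts with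
    | nil => rw [h] at hlen; simp at hlen
    | cons a t => exact ⟨a, t, rfl⟩
  have htne : t ≠ [] := by
    intro h
    rw [hat, h] at hlen
    norm_num at hlen
  have hjunc : ∀ x ∈ w.darts.getLast?, ∀ y ∈ w.darts.head?,
      x.toProd.2 = y.toProd.1 ∧ x.edge ≠ y.edge := by
    intro x hx y hy
    refine ⟨hDparts.2.2 x hx y hy, ?_⟩
    rw [hat] at hx hy
    rw [List.head?_cons, Option.mem_some_iff] at hy
    have hxlast : x = (a :: t).getLast (by simp) := by
      rwa [List.getLast?_eq_getLast (by simp), Option.mem_some_iff, eq_comm] at hx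
    have hxmem : x ∈ t := hxlast ▸ (List.getLast_cons htne ▸ List.getLast_mem htne)
    have hne := (List.pairwise_cons.mp (hat ▸ hpw)).1 x hxmem
    rw [hy] at hne
    exact hne.symm
  have hchain2 : List.Chain' (fun d d' : G.Dart =>
      d.toProd.2 = d'.toProd.1 ∧ d.edge ≠ d'.edge) (w.darts ++ w.darts) :=
    List.isChain_append.mpr ⟨hchainL, hchainL, hjunc⟩
  -- split at d0
  obtain ⟨s, t2, hst⟩ := List.append_of_mem hd0mem
  have hsplit : w.darts ++ w.darts = s ++ d0 :: (t2 ++ w.darts) := by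
    rw [hst]; simp
  rw [hsplit] at hchain2
  have hsuf := (List.isChain_append.mp hchain2).2.1
  have hchainC : List.Chain (fun d d' : G.Dart =>
      d.toProd.2 = d'.toProd.1 ∧ d.edge ≠ d'.edge) d0 (t2 ++ w.darts) := hsuf
  intro d hd
  have hPd : ¬ r d.toProd.1 d.toProd.2 := by
    by_cases hdd : d = d0
    · exact hdd ▸ hd0
    · exact chain_all' hstep hchainC hd0 d (List.mem_append_right _ hd)
  exact (((hG _ _).mp d.adj).2).resolve_left hPd
end

section
/- The derivative of a curve of Lie brackets is a 2-cocycle: let V be a finite-dimensional complex vector space (with its canonical Hausdorff vector-space topology on the space of bilinear maps V → V → V), and let t ↦ μ_t (t ∈ ℝ) be a map into the space of bilinear maps V → V → V such that each μ_t is a Lie bracket (antisymmetric and satisfying the Jacobi identity) and such that t ↦ μ_t has derivative c at t = 0. Then c x y = − c y x for all x, y ∈ V, and for all x, y, z ∈ V: μ_0 x (c y z) + μ_0 y (c z x) + μ_0 z (c x y) + c x (μ_0 y z) + c y (μ_0 z x) + c z (μ_0 x y) = 0. -/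
instance continuousSMul_real_clm_clm_port (V : Type*) [NormedAddCommGroup V] [NormedSpace ℂ V] :
    ContinuousSMul ℝ (V →L[ℂ] V →L[ℂ] V) :=
  by
  constructor
  have h : (fun p : ℝ × (V →L[ℂ] V →L[ℂ] V) => p.1 • p.2) = fun p => ((p.1 : ℂ)) • p.2 := by
    funext p; ext x y; simp [Complex.coe_smul]
  rw [h]
  exact (Complex.continuous_ofReal.comp continuous_fst).smul continuous_snd

/-- The derivative of a curve of Lie brackets is a 2-cocycle: if `t ↦ μ t` is a curve of
Lie brackets on a finite-dimensional complex vector space `V` (each antisymmetric and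
satisfying the Jacobi identity) with derivative `c` at `t = 0`, then `c` is antisymmetric
and satisfies the 2-cocycle identity with respect to the bracket `μ 0`. -/
theorem deriv_of_curve_of_brackets_is_cocycle
    (V : Type*) [NormedAddCommGroup V] [NormedSpace ℂ V] [FiniteDimensional ℂ V]
    (μ : ℝ → (V →L[ℂ] V →L[ℂ] V)) (c : V →L[ℂ] V →L[ℂ] V)
    (hanti : ∀ t : ℝ, ∀ x y : V, μ t x y = - μ t y x)
    (hjacobi : ∀ t : ℝ, ∀ x y z : V,
      μ t x (μ t y z) + μ t y (μ t z x) + μ t z (μ t x y) = 0)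
    (hderiv : HasDerivAt μ c 0) :
    (∀ x y : V, c x y = - c y x) ∧
    (∀ x y z : V,
      μ 0 x (c y z) + μ 0 y (c z x) + μ 0 z (c x y)
        + c x (μ 0 y z) + c y (μ 0 z x) + c z (μ 0 x y) = 0) := by
  have hderiv' : @HasDerivAt ℝ _ (V →L[ℂ] V →L[ℂ] V) NormedAddCommGroup.toAddCommGroup NormedSpace.toModule PseudoMetricSpace.toUniformSpace.toTopologicalSpace _ μ c 0 := hderiv
  -- evaluation derivative: t ↦ μ t x y has derivative c x y at 0
  have heval : ∀ x y : V, HasDerivAt (fun t => μ t x y) (c x y) 0 := by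
    intro x y
    have h := ((((ContinuousLinearMap.apply ℂ V y).comp
        (ContinuousLinearMap.apply ℂ (V →L[ℂ] V) x)).restrictScalars ℝ)
      ).hasFDerivAt.comp_hasDerivAt (0 : ℝ) hderiv'
    exact h
  -- curve of restricted operators: t ↦ (μ t x : V →L[ℝ] V)
  have hop : ∀ x : V, HasDerivAt
      (fun t => ((μ t x).restrictScalars ℝ : V →L[ℝ] V))
      ((c x).restrictScalars ℝ) 0 := by
    intro x
    have h := ((ContinuousLinearMap.restrictScalarsL ℂ V V ℝ ℝ).comp
        ((ContinuousLinearMap.apply ℂ (V →L[ℂ] V) x).restrictScalars ℝ)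
      ).hasFDerivAt.comp_hasDerivAt (0 : ℝ) hderiv'
    exact h
  have hquad : ∀ x y z : V, HasDerivAt (fun t => μ t x (μ t y z))
      (c x (μ 0 y z) + μ 0 x (c y z)) 0 := by
    intro x y z
    have := (hop x).clm_apply (heval y z)
    simpa using this
  constructor
  · intro x y
    have h : HasDerivAt (fun t => μ t x y + μ t y x) (c x y + c y x) 0 :=
      (heval x y).add (heval y x)
    have hz : (fun t => μ t x y + μ t y x) = fun _ => (0 : V) := by
      funext t; rw [hanti t x y]; abel
    rw [hz] at h
    have := h.unique (hasDerivAt_const 0 0)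
    have h2 : c x y + c y x = 0 := this
    exact eq_neg_of_add_eq_zero_left h2
  · intro x y z
    have h : HasDerivAt
        (fun t => μ t x (μ t y z) + μ t y (μ t z x) + μ t z (μ t x y))
        ((c x (μ 0 y z) + μ 0 x (c y z)) + (c y (μ 0 z x) + μ 0 y (c z x))
          + (c z (μ 0 x y) + μ 0 z (c x y))) 0 :=
      ((hquad x y z).add (hquad y z x)).add (hquad z x y)
    have hz : (fun t => μ t x (μ t y z) + μ t y (μ t z x) + μ t z (μ t x y))
        = fun _ => (0 : V) := by
      funext t; exact hjacobi t x y z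
    rw [hz] at h
    have h2 := h.unique (hasDerivAt_const 0 0)
    rw [← h2]; abel
end
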